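/- Let ℓ ≥ 1 be an integer and let y₁,…,y_ℓ ∈ ℂ. The 2×ℓ complex matrix with first row (y₁,y₂,…,y_ℓ) and second row (y₂,y₃,…,y_ℓ,y₁) has rank at most 1 if and only if there exists c ∈ ℂ with c^ℓ = 1 such that y_j = c^{ℓ+1−j}·y₁ for every j with 2 ≤ j ≤ ℓ. -/

import Mathlib

open Submodule Module

lemma rank_le_one_of_row_smul {n : ℕ} (M : Matrix (Fin 2) (Fin n) ℂ) (a : ℂ)
    (h : M 1 = a • M 0) : M.rank ≤ 1 := by
  rw [Matrix.rank_eq_finrank_span_row]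
  have hle : Submodule.span ℂ (Set.range M) ≤ Submodule.span ℂ ({M 0} : Set (Fin n → ℂ)) := by
    rw [Submodule.span_le]
    rintro x ⟨i, rfl⟩
    fin_cases i
    · exact Submodule.subset_span rfl
    · exact h ▸ Submodule.smul_mem _ a (Submodule.subset_span rfl)
  calc finrank ℂ (Submodule.span ℂ (Set.range M))
      ≤ finrank ℂ (Submodule.span ℂ ({M 0} : Set (Fin n → ℂ))) := Submodule.finrank_mono hle
    _ ≤ 1 := (finrank_span_le_card _).trans (by simp)

lemma row_smul_of_rank_le_one {n : ℕ} (M : Matrix (Fin 2) (Fin n) ℂ)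
    (h : M.rank ≤ 1) (h0 : M 0 ≠ 0) : ∃ a : ℂ, M 1 = a • M 0 := by
  rw [Matrix.rank_eq_finrank_span_row] at h
  have hle : Submodule.span ℂ ({M 0} : Set (Fin n → ℂ)) ≤ Submodule.span ℂ (Set.range M) :=
    Submodule.span_mono (by simp [Set.singleton_subset_iff]; exact ⟨0, rfl⟩)
  have heq : Submodule.span ℂ ({M 0} : Set (Fin n → ℂ)) = Submodule.span ℂ (Set.range M) :=
    Submodule.eq_of_le_of_finrank_le hle (by rw [finrank_span_singleton h0]; exact h)
  have : M 1 ∈ Submodule.span ℂ ({M 0} : Set (Fin n → ℂ)) := by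
    rw [heq]; exact Submodule.subset_span ⟨1, rfl⟩
  obtain ⟨a, ha⟩ := Submodule.mem_span_singleton.mp this
  exact ⟨a, ha.symm⟩

/-- Let `ℓ ≥ 1` and `y₁,…,y_ℓ ∈ ℂ` (indexed from `0`, so `y ⟨0,_⟩` is `y₁`). The `2 × ℓ`
matrix with rows `(y₁,…,y_ℓ)` and `(y₂,…,y_ℓ,y₁)` has rank at most `1` iff there is `c ∈ ℂ`
with `c^ℓ = 1` such that `y_j = c^{ℓ+1−j}·y₁` for all `2 ≤ j ≤ ℓ` (in `0`-based indexing: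
`y j = c^{ℓ−j}·y 0` for all `j ≠ 0`). -/
theorem rank_le_one_iff_cyclic_relation (ℓ : ℕ) (hℓ : 1 ≤ ℓ) (y : Fin ℓ → ℂ) :
    (Matrix.of ![fun k : Fin ℓ => y k,
        fun k : Fin ℓ => y ⟨((k : ℕ) + 1) % ℓ, Nat.mod_lt _ hℓ⟩]).rank ≤ 1 ↔
    ∃ c : ℂ, c ^ ℓ = 1 ∧
      ∀ j : Fin ℓ, j ≠ ⟨0, hℓ⟩ → y j = c ^ (ℓ - (j : ℕ)) * y ⟨0, hℓ⟩ := by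
  set M : Matrix (Fin 2) (Fin ℓ) ℂ := Matrix.of ![fun k : Fin ℓ => y k,
      fun k : Fin ℓ => y ⟨((k : ℕ) + 1) % ℓ, Nat.mod_lt _ hℓ⟩] with hM
  have hM0 : M 0 = y := rfl
  have hM1 : M 1 = fun k : Fin ℓ => y ⟨((k : ℕ) + 1) % ℓ, Nat.mod_lt _ hℓ⟩ := rfl
  constructor
  · intro h
    by_cases hy : y = 0
    · refine ⟨1, one_pow ℓ, fun j _ => by simp [hy]⟩
    · obtain ⟨a, ha⟩ := row_smul_of_rank_le_one M h (by rw [hM0]; exact hy)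
      have hstep : ∀ k : Fin ℓ, y ⟨((k : ℕ) + 1) % ℓ, Nat.mod_lt _ hℓ⟩ = a * y k := by
        intro k
        have := congrFun ha k
        rw [hM0, hM1] at this
        simpa using this
      have hpow : ∀ n (hn : n < ℓ), y ⟨n, hn⟩ = a ^ n * y ⟨0, hℓ⟩ := by
        intro n
        induction n with
        | zero => intro hn; simp
        | succ m ih =>
          intro hn
          have hm : m < ℓ := Nat.lt_of_succ_lt hn
          have hs := hstep ⟨m, hm⟩
          have hq : (⟨(((⟨m, hm⟩ : Fin ℓ) : ℕ) + 1) % ℓ, Nat.mod_lt _ hℓ⟩ : Fin ℓ) = ⟨m + 1, hn⟩ :=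
            Fin.ext (Nat.mod_eq_of_lt hn)
          rw [hq] at hs
          rw [hs, ih hm, pow_succ]; ring
      by_cases hy0 : y ⟨0, hℓ⟩ = 0
      · exact absurd (funext fun j => by
          rcases j with ⟨n, hn⟩; rw [hpow n hn, hy0, mul_zero]; rfl) hy
      · have hlast : ℓ - 1 < ℓ := Nat.sub_lt hℓ one_pos
        have hs := hstep ⟨ℓ - 1, hlast⟩
        have hidx : (⟨(((⟨ℓ - 1, hlast⟩ : Fin ℓ) : ℕ) + 1) % ℓ, Nat.mod_lt _ hℓ⟩ : Fin ℓ)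
            = ⟨0, hℓ⟩ := Fin.ext (by
              show (ℓ - 1 + 1) % ℓ = 0
              rw [Nat.sub_add_cancel hℓ, Nat.mod_self])
        rw [hidx, hpow (ℓ - 1) hlast] at hs
        have haℓ : a ^ ℓ = 1 := by
          have : y ⟨0, hℓ⟩ * 1 = y ⟨0, hℓ⟩ * a ^ ℓ := by
            rw [mul_one]
            calc y ⟨0, hℓ⟩ = a * (a ^ (ℓ - 1) * y ⟨0, hℓ⟩) := hs
              _ = y ⟨0, hℓ⟩ * a ^ ℓ := by
                  rw [← mul_assoc, ← pow_succ', Nat.sub_add_cancel hℓ]; ring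
          exact ((mul_left_cancel₀ hy0 this)).symm
        refine ⟨a ^ (ℓ - 1), by rw [← pow_mul, mul_comm, pow_mul, haℓ, one_pow], ?_⟩
        intro j hj
        rcases j with ⟨n, hn⟩
        rw [hpow n hn, ← pow_mul]
        congr 1
        obtain ⟨m, hm⟩ : ∃ m, ℓ = n + m + 1 := ⟨ℓ - n - 1, by omega⟩
        have e1 : ℓ - 1 = n + m := by omega
        have e2 : ℓ - n = m + 1 := by omega
        have he : (ℓ - 1) * (ℓ - n) = n + (n + m + 1) * m := by rw [e1, e2, ← hm]; subst hm; ring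
        rw [he, pow_add, ← hm, pow_mul, haℓ, one_pow, mul_one]
  · rintro ⟨c, hc, hrel⟩
    have hall : ∀ j : Fin ℓ, y j = c ^ (ℓ - (j : ℕ)) * y ⟨0, hℓ⟩ := by
      intro j
      by_cases hj : j = ⟨0, hℓ⟩
      · subst hj; simp [hc]
      · exact hrel j hj
    apply rank_le_one_of_row_smul M (c ^ (ℓ - 1))
    rw [hM0, hM1]
    funext k
    show y ⟨((k : ℕ) + 1) % ℓ, Nat.mod_lt _ hℓ⟩ = c ^ (ℓ - 1) * y k
    rw [hall ⟨((k : ℕ) + 1) % ℓ, Nat.mod_lt _ hℓ⟩, hall k]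
    rcases Nat.lt_or_ge ((k : ℕ) + 1) ℓ with hk | hk
    · have hmod : ((k : ℕ) + 1) % ℓ = (k : ℕ) + 1 := Nat.mod_eq_of_lt hk
      simp only [hmod]
      rw [← mul_assoc, ← pow_add]
      have : (ℓ - 1) + (ℓ - (k : ℕ)) = ℓ + (ℓ - ((k : ℕ) + 1)) := by omega
      rw [this, pow_add, hc, one_mul]
    · have hkℓ : (k : ℕ) + 1 = ℓ := by have := k.isLt; omega
      have hmod : ((k : ℕ) + 1) % ℓ = 0 := by rw [hkℓ, Nat.mod_self]
      simp only [hmod]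
      have h1 : ℓ - (k : ℕ) = 1 := by omega
      rw [h1, Nat.sub_zero, hc, pow_one, ← mul_assoc, ← pow_succ,
        Nat.sub_add_cancel hℓ, hc, one_mul]
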